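/- Let V_0 : ℤ → ℝ, ε_1, ε_2 ∈ ℝ, and let ψ_1, ψ_2 : ℤ → ℝ satisfy −Δ²ψ_j(n) + V_0(n)ψ_j(n) = ε_j ψ_j(n+2) for all n (j = 1, 2). Assume ψ_1(n) ≠ 0 and C(ψ_1, ψ_2)(n) = ψ_1(n)ψ_2(n+1) − ψ_1(n+1)ψ_2(n) ≠ 0 for all n. Set f_1(n) = Δψ_1(n)/ψ_1(n), V_1(n) = V_0(n+1) − 2Δf_1(n+1), ψ̃_2(n) = −Δψ_2(n) + f_1(n)ψ_2(n), f_2(n) = Δψ̃_2(n)/ψ̃_2(n), and V_2(n) = V_1(n+1) − 2Δf_2(n+1). Then for all n ∈ ℤ: V_2(n) = V_0(n+2) − 2Δg(n), where g(n) = (ψ_1(n+3)ψ_2(n+1) − ψ_1(n+1)ψ_2(n+3)) / (ψ_1(n+2)ψ_2(n+1) − ψ_1(n+1)ψ_2(n+2)). In particular V_2 is unchanged when ψ_1 and ψ_2 are interchanged (Bianchi property). -/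

import Mathlib

lemma key18 (a1 a2 a3 a4 b1 b2 b3 b4 v : ℝ)
    (ha1 : a1 ≠ 0) (ha2 : a2 ≠ 0) (ha3 : a3 ≠ 0)
    (hC1 : a1*b2 - a2*b1 ≠ 0) (hC2 : a2*b3 - a3*b2 ≠ 0) :
    v - 2*((a4-a3)/a3 - (a3-a2)/a2)
      - 2*(((-(a3*b4 - a4*b3)/a3) - (-(a2*b3 - a3*b2)/a2))/(-(a2*b3 - a3*b2)/a2)
         - ((-(a2*b3 - a3*b2)/a2) - (-(a1*b2 - a2*b1)/a1))/(-(a1*b2 - a2*b1)/a1))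
    = v - 2*((a4*b2 - a2*b4)/(a3*b2 - a2*b3) - (a3*b1 - a1*b3)/(a2*b1 - a1*b2)) := by
  have h1 : -(a1*b2 - a2*b1)/a1 ≠ 0 := div_ne_zero (neg_ne_zero.mpr hC1) ha1
  have h2 : -(a2*b3 - a3*b2)/a2 ≠ 0 := div_ne_zero (neg_ne_zero.mpr hC2) ha2
  have hD0 : a2*b1 - a1*b2 ≠ 0 := by intro h; apply hC1; linarith
  have hD1 : a3*b2 - a2*b3 ≠ 0 := by intro h; apply hC2; linarith
  have e1 : ((-(a3*b4 - a4*b3)/a3) - (-(a2*b3 - a3*b2)/a2))/(-(a2*b3 - a3*b2)/a2)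
      = (a3*b4 - a4*b3)*a2/(a3*(a2*b3 - a3*b2)) - 1 := by
    generalize a2*b3 - a3*b2 = Q at hC2 ⊢
    generalize a3*b4 - a4*b3 = R
    field_simp
    ring
  have e2 : ((-(a2*b3 - a3*b2)/a2) - (-(a1*b2 - a2*b1)/a1))/(-(a1*b2 - a2*b1)/a1)
      = (a2*b3 - a3*b2)*a1/(a2*(a1*b2 - a2*b1)) - 1 := by
    generalize a2*b3 - a3*b2 = Q
    generalize a1*b2 - a2*b1 = P at hC1 ⊢
    field_simp
    ring
  rw [e1, e2, show a3*b2 - a2*b3 = -(a2*b3 - a3*b2) by ring,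
    show a2*b1 - a1*b2 = -(a1*b2 - a2*b1) by ring]
  generalize hP : a1*b2 - a2*b1 = P at hC1 ⊢
  generalize hQ : a2*b3 - a3*b2 = Q at hC2 ⊢
  field_simp
  subst hP hQ
  ring

/-- Second-order Darboux (Crum) step: with the notation of the
iterated transformation, V₂(n) = V₀(n+2) − 2Δg(n) where
g(n) = (ψ₁(n+3)ψ₂(n+1) − ψ₁(n+1)ψ₂(n+3))/(ψ₁(n+2)ψ₂(n+1) − ψ₁(n+1)ψ₂(n+2));
in particular V₂ is symmetric under interchange of ψ₁ and ψ₂ (Bianchi property). -/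
theorem stmt_18 (V0 : ℤ → ℝ) (ε1 ε2 : ℝ) (ψ1 ψ2 : ℤ → ℝ)
    (hψ1 : ∀ n : ℤ, -(ψ1 (n+2) - 2 * ψ1 (n+1) + ψ1 n) + V0 n * ψ1 n = ε1 * ψ1 (n+2))
    (hψ2 : ∀ n : ℤ, -(ψ2 (n+2) - 2 * ψ2 (n+1) + ψ2 n) + V0 n * ψ2 n = ε2 * ψ2 (n+2))
    (hne : ∀ n : ℤ, ψ1 n ≠ 0)
    (hCne : ∀ n : ℤ, ψ1 n * ψ2 (n+1) - ψ1 (n+1) * ψ2 n ≠ 0)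
    (f1 : ℤ → ℝ)
    (hf1 : ∀ n : ℤ, f1 n = (ψ1 (n+1) - ψ1 n) / ψ1 n)
    (V1 : ℤ → ℝ)
    (hV1 : ∀ n : ℤ, V1 n = V0 (n+1) - 2 * (f1 (n+2) - f1 (n+1)))
    (ψt2 : ℤ → ℝ)
    (hψt2 : ∀ n : ℤ, ψt2 n = -(ψ2 (n+1) - ψ2 n) + f1 n * ψ2 n)
    (f2 : ℤ → ℝ)
    (hf2 : ∀ n : ℤ, f2 n = (ψt2 (n+1) - ψt2 n) / ψt2 n)
    (V2 : ℤ → ℝ)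
    (hV2 : ∀ n : ℤ, V2 n = V1 (n+1) - 2 * (f2 (n+2) - f2 (n+1)))
    (g : ℤ → ℝ)
    (hg : ∀ n : ℤ, g n = (ψ1 (n+3) * ψ2 (n+1) - ψ1 (n+1) * ψ2 (n+3)) /
      (ψ1 (n+2) * ψ2 (n+1) - ψ1 (n+1) * ψ2 (n+2))) :
    ∀ n : ℤ, V2 n = V0 (n+2) - 2 * (g (n+1) - g n) := by
  have hpt : ∀ m : ℤ, ψt2 m = -(ψ1 m * ψ2 (m+1) - ψ1 (m+1) * ψ2 m) / ψ1 m := by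
    intro m
    rw [hψt2 m, hf1 m]
    field_simp [hne m]
    ring
  intro n
  simp only [hV2, hV1, hf2, hg, hpt, hf1]
  simp only [show (n:ℤ)+1+1 = n+2 from by ring, show (n:ℤ)+1+2 = n+3 from by ring,
    show (n:ℤ)+2+1 = n+3 from by ring, show (n:ℤ)+3+1 = n+4 from by ring,
    show (n:ℤ)+1+3 = n+4 from by ring, show (n:ℤ)+2+2 = n+4 from by ring]
  have hC1 : ψ1 (n+1) * ψ2 (n+2) - ψ1 (n+2) * ψ2 (n+1) ≠ 0 := by
    have := hCne (n+1)
    simpa [show (n:ℤ)+1+1 = n+2 from by ring] using this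
  have hC2 : ψ1 (n+2) * ψ2 (n+3) - ψ1 (n+3) * ψ2 (n+2) ≠ 0 := by
    have := hCne (n+2)
    simpa [show (n:ℤ)+2+1 = n+3 from by ring] using this
  exact key18 (ψ1 (n+1)) (ψ1 (n+2)) (ψ1 (n+3)) (ψ1 (n+4))
    (ψ2 (n+1)) (ψ2 (n+2)) (ψ2 (n+3)) (ψ2 (n+4)) (V0 (n+2))
    (hne (n+1)) (hne (n+2)) (hne (n+3)) hC1 hC2
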